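/- arXiv:1706.00298 — 2 statements merged into one kernel-verified Lean document; each statement's English description precedes it below -/
import Mathlib

section
/- Let c > 0, λ_L > 0, λ_N > 0, C_L > 0, C_N > 0, α_L > 0, α_N > 0 be real numbers. Let D_L and D_N be independent real-valued random variables such that D_E has probability density f_E(r) = (2λ_E·r/√(r² − c²))·e^{-2λ_E√(r² − c²)} on (c, ∞) for E ∈ {L, N}. Define A_L(r) = max{c, ((C_N/C_L)·r^{-α_N})^{-1/α_L}}. Then the probability that C_N·D_N^{-α_N} > C_L·D_L^{-α_L} (i.e., that the user connects to an NLOS base station) equals ∫_c^∞ f_N(r)·e^{-2λ_L·√(A_L(r)² − c²)} dr. -/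
open MeasureTheory ProbabilityTheory Real

section AuxProbConnectNLOS
open Filter Set Topology

lemma auxMeasRpow (p : ℝ) : Measurable fun x : ℝ => x ^ p := by
  apply measurable_of_continuousOn_compl_singleton (0 : ℝ)
  intro x hx
  exact (Real.continuousAt_rpow_const x p (Or.inl hx)).continuousWithinAt

lemma auxHasDeriv (c lam : ℝ) (hc : 0 < c) {x : ℝ} (hx : c < x) :
    HasDerivAt (fun t : ℝ => -Real.exp (-(2 * lam) * Real.sqrt (t ^ 2 - c ^ 2)))
      ((2 * lam * x / Real.sqrt (x ^ 2 - c ^ 2)) *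
        Real.exp (-(2 * lam) * Real.sqrt (x ^ 2 - c ^ 2))) x := by
  have hpos : 0 < x ^ 2 - c ^ 2 := by nlinarith
  have hs : Real.sqrt (x ^ 2 - c ^ 2) ≠ 0 := (Real.sqrt_pos.mpr hpos).ne'
  have h1 : HasDerivAt (fun t : ℝ => t ^ 2 - c ^ 2) (2 * x) x := by
    simpa using (hasDerivAt_pow 2 x).sub_const (c ^ 2)
  have h2 : HasDerivAt (fun t : ℝ => Real.sqrt (t ^ 2 - c ^ 2))
      (x / Real.sqrt (x ^ 2 - c ^ 2)) x := by
    have h := (Real.hasDerivAt_sqrt hpos.ne').comp x h1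
    refine h.congr_deriv ?_
    field_simp
  have h3 := (((h2.const_mul (-(2 * lam))).exp).neg)
  refine h3.congr_deriv ?_
  field_simp

lemma auxTendsto (c lam : ℝ) (hc : 0 < c) (hlam : 0 < lam) :
    Tendsto (fun t : ℝ => -Real.exp (-(2 * lam) * Real.sqrt (t ^ 2 - c ^ 2))) atTop (𝓝 0) := by
  have hsq : Tendsto (fun t : ℝ => Real.sqrt (t ^ 2 - c ^ 2)) atTop atTop := by
    rw [tendsto_atTop_atTop]
    intro b
    refine ⟨max 0 b + c, fun x hx => ?_⟩
    have hb0 : (0 : ℝ) ≤ max 0 b := le_max_left 0 b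
    have : max 0 b ≤ Real.sqrt (x ^ 2 - c ^ 2) := by
      rw [Real.le_sqrt hb0 (by nlinarith)]
      nlinarith
    exact le_trans (le_max_right 0 b) this
  have h1 : Tendsto (fun t : ℝ => -(2 * lam) * Real.sqrt (t ^ 2 - c ^ 2)) atTop atBot := by
    have := hsq.const_mul_atTop_of_neg (by nlinarith : -(2 * lam) < 0)
    exact this
  have := (Real.tendsto_exp_atBot.comp h1).neg
  simpa using this

lemma auxIntegrable (c lam : ℝ) (hc : 0 < c) (hlam : 0 < lam) {a : ℝ} (ha : c ≤ a) :
    IntegrableOn (fun x : ℝ => (2 * lam * x / Real.sqrt (x ^ 2 - c ^ 2)) *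
        Real.exp (-(2 * lam) * Real.sqrt (x ^ 2 - c ^ 2))) (Set.Ioi a) := by
  have hcont : Continuous fun t : ℝ => -Real.exp (-(2 * lam) * Real.sqrt (t ^ 2 - c ^ 2)) := by
    fun_prop
  refine integrableOn_Ioi_deriv_of_nonneg hcont.continuousWithinAt
    (fun x hx => auxHasDeriv c lam hc (lt_of_le_of_lt ha hx)) (fun x hx => ?_)
    (auxTendsto c lam hc hlam)
  have hxc : c < x := lt_of_le_of_lt ha hx
  have hx0 : (0 : ℝ) < x := hc.trans hxc
  exact mul_nonneg (div_nonneg (by positivity) (Real.sqrt_nonneg _)) (Real.exp_pos _).le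

lemma auxIntegral (c lam : ℝ) (hc : 0 < c) (hlam : 0 < lam) {a : ℝ} (ha : c ≤ a) :
    (∫ x in Set.Ioi a, (2 * lam * x / Real.sqrt (x ^ 2 - c ^ 2)) *
        Real.exp (-(2 * lam) * Real.sqrt (x ^ 2 - c ^ 2)))
      = Real.exp (-(2 * lam) * Real.sqrt (a ^ 2 - c ^ 2)) := by
  have hcont : Continuous fun t : ℝ => -Real.exp (-(2 * lam) * Real.sqrt (t ^ 2 - c ^ 2)) := by
    fun_prop
  have hnn : ∀ x ∈ Set.Ioi a, (0:ℝ) ≤ (2 * lam * x / Real.sqrt (x ^ 2 - c ^ 2)) *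
      Real.exp (-(2 * lam) * Real.sqrt (x ^ 2 - c ^ 2)) := by
    intro x hx
    have hxc : c < x := lt_of_le_of_lt ha hx
    have hx0 : (0 : ℝ) < x := hc.trans hxc
    exact mul_nonneg (div_nonneg (by positivity) (Real.sqrt_nonneg _)) (Real.exp_pos _).le
  have h := integral_Ioi_of_hasDerivAt_of_nonneg hcont.continuousWithinAt
    (fun x hx => auxHasDeriv c lam hc (lt_of_le_of_lt ha hx)) hnn
    (auxTendsto c lam hc hlam)
  rw [h]; ring

end AuxProbConnectNLOS

open Topology in
/-- Lemma 2, Eq. (7), of the paper: the probability that the user connects to an NLOS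
base station (i.e., that `C_N·D_N^{−α_N} > C_L·D_L^{−α_L}`) equals
`∫_c^∞ f_N(r)·exp (−2λ_L √(A_L(r)² − c²)) dr`. -/
theorem prob_connect_NLOS
    {Ω : Type*} [MeasureSpace Ω] [IsProbabilityMeasure (ℙ : Measure Ω)]
    (c lamL lamN CL CN aL aN : ℝ)
    (hc : 0 < c) (hlamL : 0 < lamL) (hlamN : 0 < lamN)
    (hCL : 0 < CL) (hCN : 0 < CN) (haL : 0 < aL) (haN : 0 < aN)
    (DL DN : Ω → ℝ) (hDL : Measurable DL) (hDN : Measurable DN)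
    (hindep : IndepFun DL DN ℙ)
    (fL fN : ℝ → ℝ)
    (hfL : ∀ r, fL r = (2 * lamL * r / Real.sqrt (r ^ 2 - c ^ 2)) *
      Real.exp (-(2 * lamL) * Real.sqrt (r ^ 2 - c ^ 2)))
    (hfN : ∀ r, fN r = (2 * lamN * r / Real.sqrt (r ^ 2 - c ^ 2)) *
      Real.exp (-(2 * lamN) * Real.sqrt (r ^ 2 - c ^ 2)))
    (hDLpdf : Measure.map DL ℙ =
      volume.withDensity (fun r => ENNReal.ofReal (if c < r then fL r else 0)))
    (hDNpdf : Measure.map DN ℙ =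
      volume.withDensity (fun r => ENNReal.ofReal (if c < r then fN r else 0)))
    (AL : ℝ → ℝ)
    (hAL : ∀ r, AL r = max c ((CN / CL * r ^ (-aN)) ^ (-1 / aL))) :
    (ℙ {ω | CL * (DL ω) ^ (-aL) < CN * (DN ω) ^ (-aN)}).toReal =
      ∫ r in Set.Ioi c,
        fN r * Real.exp (-(2 * lamL) * Real.sqrt ((AL r) ^ 2 - c ^ 2)) := by
  classical
  -- basic measurability facts
  have hmsqrt : Measurable fun r : ℝ => Real.sqrt (r ^ 2 - c ^ 2) :=
    Real.continuous_sqrt.measurable.comp ((measurable_id.pow_const 2).sub measurable_const)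
  have hmfL : Measurable fL := by
    have : fL = fun r => (2 * lamL * r / Real.sqrt (r ^ 2 - c ^ 2)) *
        Real.exp (-(2 * lamL) * Real.sqrt (r ^ 2 - c ^ 2)) := funext hfL
    rw [this]
    exact ((measurable_const.mul measurable_id).div hmsqrt).mul
      (Real.measurable_exp.comp (measurable_const.mul hmsqrt))
  have hmfN : Measurable fN := by
    have : fN = fun r => (2 * lamN * r / Real.sqrt (r ^ 2 - c ^ 2)) *
        Real.exp (-(2 * lamN) * Real.sqrt (r ^ 2 - c ^ 2)) := funext hfN
    rw [this]
    exact ((measurable_const.mul measurable_id).div hmsqrt).mul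
      (Real.measurable_exp.comp (measurable_const.mul hmsqrt))
  have hmAL : Measurable AL := by
    have : AL = fun r => max c ((CN / CL * r ^ (-aN)) ^ (-1 / aL)) := funext hAL
    rw [this]
    exact measurable_const.max ((auxMeasRpow (-1 / aL)).comp
      (measurable_const.mul (auxMeasRpow (-aN))))
  have hmExpAL : Measurable fun y : ℝ =>
      Real.exp (-(2 * lamL) * Real.sqrt ((AL y) ^ 2 - c ^ 2)) :=
    Real.measurable_exp.comp (measurable_const.mul
      (Real.continuous_sqrt.measurable.comp ((hmAL.pow_const 2).sub measurable_const)))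
  -- the event as a preimage
  set S : Set (ℝ × ℝ) := {p : ℝ × ℝ | CL * p.2 ^ (-aL) < CN * p.1 ^ (-aN)} with hS
  have hmS : MeasurableSet S :=
    measurableSet_lt (measurable_const.mul ((auxMeasRpow _).comp measurable_snd))
      (measurable_const.mul ((auxMeasRpow _).comp measurable_fst))
  haveI hPL : IsProbabilityMeasure (Measure.map DL ℙ) :=
    Measure.isProbabilityMeasure_map hDL.aemeasurable
  haveI hPN : IsProbabilityMeasure (Measure.map DN ℙ) :=
    Measure.isProbabilityMeasure_map hDN.aemeasurable
  have hpair : Measurable fun ω => (DN ω, DL ω) := hDN.prodMk hDL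
  have hmap : Measure.map (fun ω => (DN ω, DL ω)) ℙ =
      (Measure.map DN ℙ).prod (Measure.map DL ℙ) :=
    (ProbabilityTheory.indepFun_iff_map_prod_eq_prod_map_map hDN.aemeasurable
      hDL.aemeasurable).mp hindep.symm
  have h1 : ℙ {ω | CL * (DL ω) ^ (-aL) < CN * (DN ω) ^ (-aN)} =
      ∫⁻ y, (Measure.map DL ℙ) (Prod.mk y ⁻¹' S) ∂(Measure.map DN ℙ) := by
    have hev : {ω | CL * (DL ω) ^ (-aL) < CN * (DN ω) ^ (-aN)} =
        (fun ω => (DN ω, DL ω)) ⁻¹' S := rfl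
    rw [hev, ← Measure.map_apply hpair hmS, hmap, Measure.prod_apply hmS]
  -- compute the inner measure
  have hALc : ∀ y, c ≤ AL y := fun y => (hAL y) ▸ le_max_left _ _
  have hμLT : ∀ y : ℝ, c < y → (Measure.map DL ℙ) (Prod.mk y ⁻¹' S) =
      ENNReal.ofReal (Real.exp (-(2 * lamL) * Real.sqrt ((AL y) ^ 2 - c ^ 2))) := by
    intro y hy
    have hy0 : (0 : ℝ) < y := hc.trans hy
    have hK : (0 : ℝ) < CN / CL * y ^ (-aN) := by
      have := Real.rpow_pos_of_pos hy0 (-aN); positivity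
    have hmT : MeasurableSet (Prod.mk y ⁻¹' S) := measurable_prodMk_left hmS
    rw [hDLpdf, withDensity_apply _ hmT]
    have hind : (fun r : ℝ => ENNReal.ofReal (if c < r then fL r else 0)) =
        (Set.Ioi c).indicator fun r => ENNReal.ofReal (fL r) := by
      funext r; by_cases h : c < r <;> simp [Set.indicator, h, Set.mem_Ioi]
    rw [hind, lintegral_indicator measurableSet_Ioi,
      Measure.restrict_restrict measurableSet_Ioi]
    have hset : Set.Ioi c ∩ Prod.mk y ⁻¹' S = Set.Ioi (AL y) := by
      have hiff : ∀ x : ℝ, c < x →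
          (CL * x ^ (-aL) < CN * y ^ (-aN) ↔ (CN / CL * y ^ (-aN)) ^ (-1 / aL) < x) := by
        intro x hx
        have hx0 : (0 : ℝ) < x := hc.trans hx
        have hCLK : CL * (CN / CL * y ^ (-aN)) = CN * y ^ (-aN) := by field_simp
        have hBpos : (0 : ℝ) < (CN / CL * y ^ (-aN)) ^ (-1 / aL) :=
          Real.rpow_pos_of_pos hK _
        have hB : ((CN / CL * y ^ (-aN)) ^ (-1 / aL)) ^ (-aL) = CN / CL * y ^ (-aN) := by
          rw [← Real.rpow_mul hK.le, show (-1 / aL) * (-aL) = 1 by field_simp, Real.rpow_one]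
        constructor
        · intro h
          have h2 : x ^ (-aL) < CN / CL * y ^ (-aN) := by
            rw [← hCLK] at h
            exact lt_of_mul_lt_mul_left h hCL.le
          rw [← hB] at h2
          exact (Real.rpow_lt_rpow_iff_of_neg hx0 hBpos (by linarith)).mp h2
        · intro h
          have h2 : x ^ (-aL) < ((CN / CL * y ^ (-aN)) ^ (-1 / aL)) ^ (-aL) :=
            (Real.rpow_lt_rpow_iff_of_neg hx0 hBpos (by linarith)).mpr h
          rw [hB] at h2
          calc CL * x ^ (-aL) < CL * (CN / CL * y ^ (-aN)) := by
                exact (mul_lt_mul_iff_right₀ hCL).mpr h2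
            _ = CN * y ^ (-aN) := hCLK
      ext x
      simp only [Set.mem_inter_iff, Set.mem_Ioi, Set.mem_preimage, hS, Set.mem_setOf_eq,
        hAL y, max_lt_iff]
      constructor
      · rintro ⟨h1', h2'⟩; exact ⟨h1', (hiff x h1').mp h2'⟩
      · rintro ⟨h1', h2'⟩; exact ⟨h1', (hiff x h1').mpr h2'⟩
    rw [hset]
    have hnn : 0 ≤ᵐ[volume.restrict (Set.Ioi (AL y))] fL := by
      filter_upwards [ae_restrict_mem measurableSet_Ioi] with x hx
      have hxc : c < x := lt_of_le_of_lt (hALc y) hx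
      have hx0 : (0 : ℝ) < x := hc.trans hxc
      rw [hfL x]
      exact mul_nonneg (div_nonneg (by positivity) (Real.sqrt_nonneg _)) (Real.exp_pos _).le
    have hInt : IntegrableOn fL (Set.Ioi (AL y)) := by
      have := auxIntegrable c lamL hc hlamL (hALc y)
      refine this.congr_fun (fun x hx => (hfL x).symm) measurableSet_Ioi
    rw [← ofReal_integral_eq_lintegral_ofReal hInt hnn]
    congr 1
    have : ∫ x in Set.Ioi (AL y), fL x = ∫ x in Set.Ioi (AL y),
        (2 * lamL * x / Real.sqrt (x ^ 2 - c ^ 2)) *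
          Real.exp (-(2 * lamL) * Real.sqrt (x ^ 2 - c ^ 2)) := by
      exact setIntegral_congr_fun measurableSet_Ioi fun x _ => hfL x
    rw [this, auxIntegral c lamL hc hlamL (hALc y)]
  -- put everything together
  have hmdensN : Measurable fun r : ℝ => ENNReal.ofReal (if c < r then fN r else 0) :=
    (hmfN.ite measurableSet_Ioi measurable_const).ennreal_ofReal
  have hmF : Measurable fun y : ℝ => (Measure.map DL ℙ) (Prod.mk y ⁻¹' S) := by
    rw [hDLpdf]
    exact measurable_measure_prodMk_left hmS
  rw [h1, hDNpdf, lintegral_withDensity_eq_lintegral_mul _ hmdensN hmF]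
  have hpt : ∀ y : ℝ,
      ((fun r : ℝ => ENNReal.ofReal (if c < r then fN r else 0)) *
        fun y : ℝ => (Measure.map DL ℙ) (Prod.mk y ⁻¹' S)) y =
      (Set.Ioi c).indicator (fun y : ℝ => ENNReal.ofReal
        (fN y * Real.exp (-(2 * lamL) * Real.sqrt ((AL y) ^ 2 - c ^ 2)))) y := by
    intro y
    simp only [Pi.mul_apply]
    by_cases hy : c < y
    · have hfNnn : 0 ≤ fN y := by
        have hy0 : (0 : ℝ) < y := hc.trans hy
        rw [hfN y]
        exact mul_nonneg (div_nonneg (by positivity) (Real.sqrt_nonneg _)) (Real.exp_pos _).le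
      rw [if_pos hy, hμLT y hy, Set.indicator_of_mem (Set.mem_Ioi.mpr hy), ← ENNReal.ofReal_mul hfNnn]
    · rw [if_neg hy, Set.indicator_of_notMem (by simpa using hy)]
      simp
  rw [lintegral_congr hpt, lintegral_indicator measurableSet_Ioi]
  have hIntfN : IntegrableOn fN (Set.Ioi c) := by
    have := auxIntegrable c lamN hc hlamN (le_refl c)
    exact this.congr_fun (fun x hx => (hfN x).symm) measurableSet_Ioi
  have hnnprod : ∀ y ∈ Set.Ioi c, (0:ℝ) ≤
      fN y * Real.exp (-(2 * lamL) * Real.sqrt ((AL y) ^ 2 - c ^ 2)) := by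
    intro y hy
    have hy0 : (0 : ℝ) < y := hc.trans hy
    have hfNnn : 0 ≤ fN y := by
      rw [hfN y]
      exact mul_nonneg (div_nonneg (by positivity) (Real.sqrt_nonneg _)) (Real.exp_pos _).le
    exact mul_nonneg hfNnn (Real.exp_pos _).le
  have hInt : IntegrableOn (fun y : ℝ =>
      fN y * Real.exp (-(2 * lamL) * Real.sqrt ((AL y) ^ 2 - c ^ 2))) (Set.Ioi c) := by
    refine Integrable.mono' hIntfN ((hmfN.mul hmExpAL).aestronglyMeasurable) ?_
    filter_upwards [ae_restrict_mem measurableSet_Ioi] with y hy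
    have hy0 : (0 : ℝ) < y := hc.trans hy
    have hfNnn : 0 ≤ fN y := by
      rw [hfN y]
      exact mul_nonneg (div_nonneg (by positivity) (Real.sqrt_nonneg _)) (Real.exp_pos _).le
    have hexp : Real.exp (-(2 * lamL) * Real.sqrt ((AL y) ^ 2 - c ^ 2)) ≤ 1 := by
      rw [Real.exp_le_one_iff]
      have := Real.sqrt_nonneg ((AL y) ^ 2 - c ^ 2)
      nlinarith
    rw [Real.norm_eq_abs, abs_mul, abs_of_nonneg hfNnn, abs_of_nonneg (Real.exp_pos _).le]
    exact mul_le_of_le_one_right hfNnn hexp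
  rw [← ofReal_integral_eq_lintegral_ofReal hInt
    (by filter_upwards [ae_restrict_mem measurableSet_Ioi] with y hy using hnnprod y hy)]
  exact ENNReal.toReal_ofReal (setIntegral_nonneg measurableSet_Ioi hnnprod)
end

section
/- Let c > 0, λ_L > 0, λ_N > 0, C_L > 0, C_N > 0, α_L > 0, α_N > 0 be real numbers. Define f_E(r) = (2λ_E·r/√(r² − c²))·e^{-2λ_E√(r² − c²)} for r > c and E ∈ {L, N}, A_L(r) = max{c, ((C_N/C_L)·r^{-α_N})^{-1/α_L}}, and A_N(r) = max{c, ((C_L/C_N)·r^{-α_L})^{-1/α_N}}. Then ∫_c^∞ f_L(r)·e^{-2λ_N·√(A_N(r)² − c²)} dr + ∫_c^∞ f_N(r)·e^{-2λ_L·√(A_L(r)² − c²)} dr = 1. -/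
open MeasureTheory Real

section Aux

open Set

private lemma exp_tail_aux {b : ℝ} (hb : 0 < b) (t : ℝ) :
    ∫ y in Ioi t, b * Real.exp (-b * y) = Real.exp (-b * t) := by
  have h := integral_comp_mul_left_Ioi (fun u => Real.exp (-u)) t hb
  simp only [neg_mul, smul_eq_mul] at h ⊢
  rw [integral_exp_neg_Ioi] at h
  rw [MeasureTheory.integral_const_mul, h]
  field_simp

private lemma exp_tail_int_aux {b : ℝ} (hb : 0 < b) (t : ℝ) :
    IntegrableOn (fun y => b * Real.exp (-b * y)) (Ioi t) :=
  (exp_neg_integrableOn_Ioi t hb).const_mul b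

private lemma exp_head_aux {b : ℝ} (hb : 0 < b) {t : ℝ} (ht : 0 ≤ t) :
    ∫ y in Ioc 0 t, b * Real.exp (-b * y) = 1 - Real.exp (-b * t) := by
  have hu : Ioc (0:ℝ) t ∪ Ioi t = Ioi 0 := Ioc_union_Ioi_eq_Ioi ht
  have hdisj : Disjoint (Ioc (0:ℝ) t) (Ioi t) := by
    rw [Set.disjoint_left]; intro a ha ha'; exact absurd ha.2 (not_le.mpr ha')
  have h1 : IntegrableOn (fun y => b * Real.exp (-b * y)) (Ioc 0 t) :=
    (exp_tail_int_aux hb 0).mono_set Ioc_subset_Ioi_self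
  have h2 := exp_tail_int_aux hb t
  have := MeasureTheory.setIntegral_union hdisj measurableSet_Ioi h1 h2
    (f := fun y => b * Real.exp (-b * y)) (μ := volume)
  rw [hu] at this
  rw [exp_tail_aux hb 0, exp_tail_aux hb t] at this
  simp only [mul_zero, Real.exp_zero] at this
  linarith

private lemma subst_lemma_aux {c : ℝ} (hc : 0 < c) (lam : ℝ) (H : ℝ → ℝ) :
    ∫ r in Ioi c, (2 * lam * r / Real.sqrt (r ^ 2 - c ^ 2)) *
        Real.exp (-(2 * lam) * Real.sqrt (r ^ 2 - c ^ 2)) * H r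
      = ∫ x in Ioi 0, 2 * lam * Real.exp (-(2 * lam) * x) * H (Real.sqrt (x ^ 2 + c ^ 2)) := by
  have himg : Ioi c = (fun x => Real.sqrt (x ^ 2 + c ^ 2)) '' Ioi 0 := by
    ext r
    constructor
    · intro hr
      have hr' : c < r := hr
      have hrpos : 0 < r := hc.trans hr'
      have hsq : 0 < r ^ 2 - c ^ 2 := by nlinarith
      refine ⟨Real.sqrt (r ^ 2 - c ^ 2), Real.sqrt_pos.mpr hsq, ?_⟩
      show Real.sqrt (Real.sqrt (r ^ 2 - c ^ 2) ^ 2 + c ^ 2) = r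
      rw [Real.sq_sqrt hsq.le, sub_add_cancel, Real.sqrt_sq hrpos.le]
    · rintro ⟨x, hx, rfl⟩
      have hx' : (0:ℝ) < x := hx
      show c < Real.sqrt (x ^ 2 + c ^ 2)
      rw [Real.lt_sqrt hc.le]
      nlinarith
  have hderiv : ∀ x ∈ Ioi (0:ℝ), HasDerivWithinAt (fun x => Real.sqrt (x ^ 2 + c ^ 2))
      (x / Real.sqrt (x ^ 2 + c ^ 2)) (Ioi 0) x := by
    intro x hx
    have hpos : 0 < x ^ 2 + c ^ 2 := by positivity
    have h1 : HasDerivAt (fun x : ℝ => x ^ 2 + c ^ 2) (2 * x) x := by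
      simpa using (hasDerivAt_pow 2 x).add_const (c ^ 2)
    have h2 := h1.sqrt hpos.ne'
    have : 2 * x / (2 * Real.sqrt (x ^ 2 + c ^ 2)) = x / Real.sqrt (x ^ 2 + c ^ 2) := by
      rw [mul_div_mul_left _ _ (two_ne_zero)]
    rw [this] at h2
    exact h2.hasDerivWithinAt
  have hinj : InjOn (fun x => Real.sqrt (x ^ 2 + c ^ 2)) (Ioi 0) := by
    intro x1 h1 x2 h2 heq
    have h1' : (0:ℝ) < x1 := h1
    have h2' : (0:ℝ) < x2 := h2
    have e1 : x1 ^ 2 + c ^ 2 = x2 ^ 2 + c ^ 2 := by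
      have := congrArg (fun t => t ^ 2) heq
      simpa [Real.sq_sqrt (by positivity : (0:ℝ) ≤ x1 ^ 2 + c ^ 2),
        Real.sq_sqrt (by positivity : (0:ℝ) ≤ x2 ^ 2 + c ^ 2)] using this
    nlinarith
  rw [himg, integral_image_eq_integral_abs_deriv_smul measurableSet_Ioi hderiv hinj]
  refine setIntegral_congr_fun measurableSet_Ioi (fun x hx => ?_)
  have hx' : (0:ℝ) < x := hx
  have hpos : 0 < x ^ 2 + c ^ 2 := by positivity
  have hs : Real.sqrt (x ^ 2 + c ^ 2) ^ 2 = x ^ 2 + c ^ 2 := Real.sq_sqrt hpos.le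
  have hsn : Real.sqrt (x ^ 2 + c ^ 2) ≠ 0 := by positivity
  have hxx : Real.sqrt (Real.sqrt (x ^ 2 + c ^ 2) ^ 2 - c ^ 2) = x := by
    rw [hs, add_sub_cancel_right, Real.sqrt_sq hx'.le]
  simp only [smul_eq_mul, hxx]
  rw [abs_of_pos (by positivity)]
  field_simp

private lemma core_iff_aux {CL CN aL aN : ℝ} (hCL : 0 < CL) (hCN : 0 < CN)
    (haL : 0 < aL) (haN : 0 < aN) {r ρ : ℝ} (hr : 0 < r) (hρ : 0 < ρ) :
    ρ < (CL / CN * r ^ (-aL)) ^ (-1 / aN) ↔ (CN / CL * ρ ^ (-aN)) ^ (-1 / aL) < r := by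
  have hB : 0 < CL / CN * r ^ (-aL) := by positivity
  have hD : 0 < CN / CL * ρ ^ (-aN) := by positivity
  have hBp : 0 < (CL / CN * r ^ (-aL)) ^ ((-1 : ℝ) / aN) := Real.rpow_pos_of_pos hB _
  have hrp : 0 < r ^ (-aL) := Real.rpow_pos_of_pos hr _
  have step1 : ρ < (CL / CN * r ^ (-aL)) ^ (-1 / aN) ↔ CL / CN * r ^ (-aL) < ρ ^ (-aN) := by
    rw [← Real.rpow_lt_rpow_iff_of_neg hBp hρ (neg_neg_iff_pos.mpr haN)]
    congr! 1
    rw [← Real.rpow_mul hB.le]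
    rw [show (-1 : ℝ) / aN * (-aN) = 1 by field_simp, Real.rpow_one]
  have step3 : r ^ (-aL) < CN / CL * ρ ^ (-aN) ↔ (CN / CL * ρ ^ (-aN)) ^ (-1 / aL) < r := by
    rw [← Real.rpow_lt_rpow_iff_of_neg (z := -1/aL) hD hrp
      (div_neg_of_neg_of_pos (by norm_num) haL)]
    congr! 1
    rw [← Real.rpow_mul hr.le]
    rw [show -aL * (-1 / aL) = 1 by field_simp, Real.rpow_one]
  rw [step1, ← step3, div_mul_eq_mul_div, div_lt_iff₀ hCN, div_mul_eq_mul_div, lt_div_iff₀ hCL]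
  constructor <;> intro h <;> nlinarith

private lemma key_iff_aux {c CL CN aL aN : ℝ} (hc : 0 < c) (hCL : 0 < CL) (hCN : 0 < CN)
    (haL : 0 < aL) (haN : 0 < aN) {x y : ℝ} (hx : 0 < x) (hy : 0 < y) :
    y < Real.sqrt ((max c ((CL / CN * Real.sqrt (x ^ 2 + c ^ 2) ^ (-aL)) ^ (-1 / aN))) ^ 2 - c ^ 2)
      ↔ Real.sqrt ((max c ((CN / CL * Real.sqrt (y ^ 2 + c ^ 2) ^ (-aN)) ^ (-1 / aL))) ^ 2 - c ^ 2)
        < x := by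
  set r := Real.sqrt (x ^ 2 + c ^ 2) with hrdef
  set ρ := Real.sqrt (y ^ 2 + c ^ 2) with hρdef
  have hr2 : r ^ 2 = x ^ 2 + c ^ 2 := Real.sq_sqrt (by positivity)
  have hρ2 : ρ ^ 2 = y ^ 2 + c ^ 2 := Real.sq_sqrt (by positivity)
  have hrc : c < r := by rw [hrdef, Real.lt_sqrt hc.le]; nlinarith
  have hρc : c < ρ := by rw [hρdef, Real.lt_sqrt hc.le]; nlinarith
  have hrpos : 0 < r := hc.trans hrc
  have hρpos : 0 < ρ := hc.trans hρc
  set T := (CL / CN * r ^ (-aL)) ^ (-1 / aN) with hT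
  set S := (CN / CL * ρ ^ (-aN)) ^ (-1 / aL) with hS
  have hmaxT : 0 ≤ max c T := le_trans hc.le (le_max_left _ _)
  have hmaxS : 0 ≤ max c S := le_trans hc.le (le_max_left _ _)
  calc y < Real.sqrt ((max c T) ^ 2 - c ^ 2) ↔ y ^ 2 < (max c T) ^ 2 - c ^ 2 :=
        Real.lt_sqrt hy.le
    _ ↔ ρ ^ 2 < (max c T) ^ 2 := by rw [hρ2]; constructor <;> intro <;> linarith
    _ ↔ ρ < max c T := pow_lt_pow_iff_left₀ hρpos.le hmaxT two_ne_zero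
    _ ↔ ρ < T := by rw [lt_max_iff, or_iff_right (not_lt.mpr hρc.le)]
    _ ↔ S < r := core_iff_aux hCL hCN haL haN hrpos hρpos
    _ ↔ max c S < r := by rw [max_lt_iff, and_iff_right hrc]
    _ ↔ (max c S) ^ 2 < r ^ 2 := (pow_lt_pow_iff_left₀ hmaxS hrpos.le two_ne_zero).symm
    _ ↔ (max c S) ^ 2 - c ^ 2 < x ^ 2 := by rw [hr2]; constructor <;> intro <;> linarith
    _ ↔ Real.sqrt ((max c S) ^ 2 - c ^ 2) < x := (Real.sqrt_lt' hx).symm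

end Aux

/-- Lemma 2, Eq. (8), of the paper: `P_L + P_N = 1`, i.e.,
`∫_c^∞ f_L(r)·e^{−2λ_N √(A_N(r)²−c²)} dr + ∫_c^∞ f_N(r)·e^{−2λ_L √(A_L(r)²−c²)} dr = 1`. -/
theorem prob_LOS_add_prob_NLOS_eq_one
    (c lamL lamN CL CN aL aN : ℝ)
    (hc : 0 < c) (hlamL : 0 < lamL) (hlamN : 0 < lamN)
    (hCL : 0 < CL) (hCN : 0 < CN) (haL : 0 < aL) (haN : 0 < aN)
    (fL fN : ℝ → ℝ)
    (hfL : ∀ r, r > c → fL r = (2 * lamL * r / Real.sqrt (r ^ 2 - c ^ 2)) *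
      Real.exp (-(2 * lamL) * Real.sqrt (r ^ 2 - c ^ 2)))
    (hfN : ∀ r, r > c → fN r = (2 * lamN * r / Real.sqrt (r ^ 2 - c ^ 2)) *
      Real.exp (-(2 * lamN) * Real.sqrt (r ^ 2 - c ^ 2)))
    (AL AN : ℝ → ℝ)
    (hAL : ∀ r, AL r = max c ((CN / CL * r ^ (-aN)) ^ (-1 / aL)))
    (hAN : ∀ r, AN r = max c ((CL / CN * r ^ (-aL)) ^ (-1 / aN))) :
    (∫ r in Set.Ioi c,
        fL r * Real.exp (-(2 * lamN) * Real.sqrt ((AN r) ^ 2 - c ^ 2))) +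
      (∫ r in Set.Ioi c,
        fN r * Real.exp (-(2 * lamL) * Real.sqrt ((AL r) ^ 2 - c ^ 2))) = 1 := by
  have hb2L : (0:ℝ) < 2 * lamL := by linarith
  have hb2N : (0:ℝ) < 2 * lamN := by linarith
  set φ : ℝ → ℝ := fun x => Real.sqrt
    ((max c ((CL / CN * Real.sqrt (x ^ 2 + c ^ 2) ^ (-aL)) ^ (-1 / aN))) ^ 2 - c ^ 2) with hφdef
  set ψ : ℝ → ℝ := fun y => Real.sqrt
    ((max c ((CN / CL * Real.sqrt (y ^ 2 + c ^ 2) ^ (-aN)) ^ (-1 / aL))) ^ 2 - c ^ 2) with hψdef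
  set g : ℝ → ℝ := fun x => 2 * lamL * Real.exp (-(2 * lamL) * x) with hgdef
  set h : ℝ → ℝ := fun y => 2 * lamN * Real.exp (-(2 * lamN) * y) with hhdef
  have hφ0 : ∀ x, 0 ≤ φ x := fun x => Real.sqrt_nonneg _
  have hψ0 : ∀ y, 0 ≤ ψ y := fun y => Real.sqrt_nonneg _
  -- measurability
  have hφm : Measurable φ := by
    apply Real.continuous_sqrt.measurable.comp
    apply Measurable.sub _ measurable_const
    apply Measurable.pow _ measurable_const
    apply Measurable.max measurable_const
    apply Measurable.pow _ measurable_const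
    apply Measurable.mul measurable_const
    apply Measurable.pow _ measurable_const
    exact (Real.continuous_sqrt.measurable).comp
      ((measurable_id.pow_const 2).add_const _)
  have hψm : Measurable ψ := by
    apply Real.continuous_sqrt.measurable.comp
    apply Measurable.sub _ measurable_const
    apply Measurable.pow _ measurable_const
    apply Measurable.max measurable_const
    apply Measurable.pow _ measurable_const
    apply Measurable.mul measurable_const
    apply Measurable.pow _ measurable_const
    exact (Real.continuous_sqrt.measurable).comp
      ((measurable_id.pow_const 2).add_const _)
  have hgm : Measurable g := ((measurable_id.const_mul (-(2 * lamL))).exp).const_mul _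
  have hhm : Measurable h := ((measurable_id.const_mul (-(2 * lamN))).exp).const_mul _
  have hgpos : ∀ x, 0 < g x := fun x => by
    simp only [hgdef]; positivity
  have hhpos : ∀ y, 0 < h y := fun y => by
    simp only [hhdef]; positivity
  have hgi : IntegrableOn g (Set.Ioi (0:ℝ)) := exp_tail_int_aux hb2L 0
  have hhi : IntegrableOn h (Set.Ioi (0:ℝ)) := exp_tail_int_aux hb2N 0
  -- transform both integrals via the substitution x = √(r²−c²)
  simp only [hAN, hAL]
  have e1 : (∫ r in Set.Ioi c, fL r * Real.exp (-(2 * lamN) *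
        Real.sqrt ((max c ((CL / CN * r ^ (-aL)) ^ (-1 / aN))) ^ 2 - c ^ 2)))
      = ∫ x in Set.Ioi (0:ℝ), g x * Real.exp (-(2 * lamN) * φ x) := by
    rw [MeasureTheory.setIntegral_congr_fun measurableSet_Ioi
      (g := fun r => (2 * lamL * r / Real.sqrt (r ^ 2 - c ^ 2)) *
        Real.exp (-(2 * lamL) * Real.sqrt (r ^ 2 - c ^ 2)) *
        Real.exp (-(2 * lamN) *
          Real.sqrt ((max c ((CL / CN * r ^ (-aL)) ^ (-1 / aN))) ^ 2 - c ^ 2)))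
      (fun r hr => by rw [hfL r hr])]
    exact subst_lemma_aux hc lamL (fun r => Real.exp (-(2 * lamN) *
      Real.sqrt ((max c ((CL / CN * r ^ (-aL)) ^ (-1 / aN))) ^ 2 - c ^ 2)))
  have e2 : (∫ r in Set.Ioi c, fN r * Real.exp (-(2 * lamL) *
        Real.sqrt ((max c ((CN / CL * r ^ (-aN)) ^ (-1 / aL))) ^ 2 - c ^ 2)))
      = ∫ y in Set.Ioi (0:ℝ), h y * Real.exp (-(2 * lamL) * ψ y) := by
    rw [MeasureTheory.setIntegral_congr_fun measurableSet_Ioi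
      (g := fun r => (2 * lamN * r / Real.sqrt (r ^ 2 - c ^ 2)) *
        Real.exp (-(2 * lamN) * Real.sqrt (r ^ 2 - c ^ 2)) *
        Real.exp (-(2 * lamL) *
          Real.sqrt ((max c ((CN / CL * r ^ (-aN)) ^ (-1 / aL))) ^ 2 - c ^ 2)))
      (fun r hr => by rw [hfN r hr])]
    exact subst_lemma_aux hc lamN (fun r => Real.exp (-(2 * lamL) *
      Real.sqrt ((max c ((CN / CL * r ^ (-aN)) ^ (-1 / aL))) ^ 2 - c ^ 2)))
  rw [e1, e2]
  -- the joint density function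
  set F : ℝ × ℝ → ℝ := fun p => if p.2 < φ p.1 then g p.1 * h p.2 else 0 with hFdef
  have hsetm : MeasurableSet {p : ℝ × ℝ | p.2 < φ p.1} :=
    measurableSet_lt measurable_snd (hφm.comp measurable_fst)
  have hFm : Measurable F :=
    Measurable.ite hsetm ((hgm.comp measurable_fst).mul (hhm.comp measurable_snd))
      measurable_const
  have hprodi : Integrable (fun p : ℝ × ℝ => g p.1 * h p.2)
      ((volume.restrict (Set.Ioi (0:ℝ))).prod (volume.restrict (Set.Ioi (0:ℝ)))) :=
    hgi.mul_prod hhi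
  have hFi : Integrable F
      ((volume.restrict (Set.Ioi (0:ℝ))).prod (volume.restrict (Set.Ioi (0:ℝ)))) := by
    refine hprodi.mono' hFm.aestronglyMeasurable ?_
    filter_upwards with p
    by_cases hp : p.2 < φ p.1
    · simp only [hFdef, if_pos hp]
      rw [Real.norm_eq_abs, abs_of_nonneg (by positivity)]
    · simp only [hFdef, if_neg hp]
      simp only [norm_zero]
      positivity
  -- inner integral in y (for fixed x)
  have inner_y : ∀ x ∈ Set.Ioi (0:ℝ), (∫ y in Set.Ioi (0:ℝ), F (x, y))
      = g x * (1 - Real.exp (-(2 * lamN) * φ x)) := by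
    intro x hx
    have hcong : ∀ y, F (x, y) = Set.indicator (Set.Iio (φ x)) (fun y => g x * h y) y := by
      intro y
      rw [Set.indicator_apply]
      simp only [Set.mem_Iio, hFdef]
    simp only [hcong]
    rw [MeasureTheory.setIntegral_indicator measurableSet_Iio, Set.Ioi_inter_Iio,
      ← MeasureTheory.integral_Ioc_eq_integral_Ioo, MeasureTheory.integral_const_mul,
      exp_head_aux hb2N (hφ0 x)]
  -- inner integral in x (for fixed y), using the key equivalence
  have inner_x : ∀ y ∈ Set.Ioi (0:ℝ), (∫ x in Set.Ioi (0:ℝ), F (x, y))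
      = h y * Real.exp (-(2 * lamL) * ψ y) := by
    intro y hy
    have hy' : (0:ℝ) < y := hy
    have hcong : Set.EqOn (fun x => F (x, y))
        (Set.indicator (Set.Ioi (ψ y)) (fun x => g x * h y)) (Set.Ioi 0) := by
      intro x hx
      have hx' : (0:ℝ) < x := hx
      rw [Set.indicator_apply]
      simp only [Set.mem_Ioi, hFdef]
      exact if_congr (key_iff_aux hc hCL hCN haL haN hx' hy') rfl rfl
    rw [MeasureTheory.setIntegral_congr_fun measurableSet_Ioi hcong,
      MeasureTheory.setIntegral_indicator measurableSet_Ioi, Set.Ioi_inter_Ioi,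
      max_eq_right (hψ0 y), MeasureTheory.integral_mul_const, exp_tail_aux hb2L (ψ y),
      mul_comm]
  -- Fubini
  have swap : (∫ x in Set.Ioi (0:ℝ), ∫ y in Set.Ioi (0:ℝ), F (x, y))
      = ∫ y in Set.Ioi (0:ℝ), ∫ x in Set.Ioi (0:ℝ), F (x, y) :=
    MeasureTheory.integral_integral_swap (f := fun x y => F (x, y)) hFi
  have e3 : (∫ y in Set.Ioi (0:ℝ), h y * Real.exp (-(2 * lamL) * ψ y))
      = ∫ x in Set.Ioi (0:ℝ), g x * (1 - Real.exp (-(2 * lamN) * φ x)) := by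
    rw [← MeasureTheory.setIntegral_congr_fun measurableSet_Ioi inner_x, ← swap]
    exact MeasureTheory.setIntegral_congr_fun measurableSet_Ioi inner_y
  rw [e3]
  -- combine
  have hE1 : ∀ x : ℝ, Real.exp (-(2 * lamN) * φ x) ≤ 1 := by
    intro x
    rw [← Real.exp_zero]
    apply Real.exp_le_exp.mpr
    have := hφ0 x
    nlinarith
  have i1 : IntegrableOn (fun x => g x * Real.exp (-(2 * lamN) * φ x)) (Set.Ioi (0:ℝ)) := by
    refine hgi.mono' (hgm.mul ((hφm.const_mul _).exp)).aestronglyMeasurable ?_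
    filter_upwards with x
    rw [Real.norm_eq_abs, abs_of_nonneg (by positivity)]
    have h1 := hE1 x
    have h2 := (hgpos x).le
    nlinarith
  have i2 : IntegrableOn (fun x => g x * (1 - Real.exp (-(2 * lamN) * φ x)))
      (Set.Ioi (0:ℝ)) := by
    refine hgi.mono' (hgm.mul (measurable_const.sub ((hφm.const_mul _).exp))).aestronglyMeasurable ?_
    filter_upwards with x
    have h1 := hE1 x
    have h2 := (hgpos x).le
    have h3 := (Real.exp_pos (-(2 * lamN) * φ x)).le
    rw [Real.norm_eq_abs, abs_of_nonneg (by nlinarith)]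
    nlinarith
  rw [← MeasureTheory.integral_add i1 i2]
  have : (∫ x in Set.Ioi (0:ℝ), (g x * Real.exp (-(2 * lamN) * φ x) +
      g x * (1 - Real.exp (-(2 * lamN) * φ x)))) = ∫ x in Set.Ioi (0:ℝ), g x :=
    MeasureTheory.setIntegral_congr_fun measurableSet_Ioi (fun x _ => by ring)
  rw [this, hgdef, exp_tail_aux hb2L 0, mul_zero, Real.exp_zero]
end
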